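/- Let p be a finitely generated metric on the free group F_n on n generators and let ε > 0. Then there exists a finitely generated metric d on F_n taking only rational values such that for every g ∈ F_n, |p(g, 1) − d(g, 1)| ≤ ε·|g| (i.e. dist(p, d) ≤ ε). -/
import Mathlib


/-- `d : α → α → ℝ` is a metric on `α`. -/
def IsMetricFun {α : Type*} (d : α → α → ℝ) : Prop :=
  (∀ x y, d x y = 0 ↔ x = y) ∧ (∀ x y, d x y = d y x) ∧
    ∀ x y z, d x z ≤ d x y + d y z

/-- `d` is a bi-invariant metric on the group `G`. -/
def IsBiInvMetric {G : Type*} [Group G] (d : G → G → ℝ) : Prop :=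
  IsMetricFun d ∧ (∀ g x y : G, d (g * x) (g * y) = d x y) ∧
    ∀ g x y : G, d (x * g) (y * g) = d x y

/-- `d` is a finitely generated metric on the group `G`: it is a bi-invariant metric and
there is a finite symmetric set `A` containing `1` such that `d a b` is the minimum of
`d a₁ b₁ + ⋯ + d aₘ bₘ` over all decompositions `a = a₁⋯aₘ`, `b = b₁⋯bₘ` with all
`aᵢ, bᵢ ∈ A`. -/
def IsFinGenMetric {G : Type*} [Group G] (d : G → G → ℝ) : Prop :=
  IsBiInvMetric d ∧ ∃ A : Finset G, (1 : G) ∈ A ∧ (∀ a ∈ A, a⁻¹ ∈ A) ∧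
    ∀ a b : G, IsLeast {s : ℝ | ∃ l : List (G × G), (∀ q ∈ l, q.1 ∈ A ∧ q.2 ∈ A) ∧
      (l.map Prod.fst).prod = a ∧ (l.map Prod.snd).prod = b ∧
      s = (l.map fun q => d q.1 q.2).sum} (d a b)

/-- The `K`-bounded variant of a finitely generated metric: `d a b` is the minimum of `K` and
of the sums `d a₁ b₁ + ⋯ + d aₘ bₘ` over all decompositions with letters in `A`. -/
def IsFinGenMetricBdd {G : Type*} [Group G] (K : ℝ) (d : G → G → ℝ) : Prop :=
  IsBiInvMetric d ∧ ∃ A : Finset G, (1 : G) ∈ A ∧ (∀ a ∈ A, a⁻¹ ∈ A) ∧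
    ∀ a b : G, IsLeast {s : ℝ | ∃ l : List (G × G), (∀ q ∈ l, q.1 ∈ A ∧ q.2 ∈ A) ∧
      (l.map Prod.fst).prod = a ∧ (l.map Prod.snd).prod = b ∧
      s = min K ((l.map fun q => d q.1 q.2).sum)} (d a b)

/-- Every finitely generated metric `p` on the free group `F_n` can be
`ε`-approximated by a finitely generated metric `d` taking only rational values:
`|p(g,1) - d(g,1)| ≤ ε·|g|` for all `g ∈ F_n`, i.e. `dist(p,d) ≤ ε`. -/
lemma my_metric_nonneg {α : Type*} {d : α → α → ℝ} (h : IsMetricFun d) (x y : α) :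
    0 ≤ d x y := by
  have h1 := (h.1 x x).2 rfl
  have h2 := h.2.2 x y x
  have h3 := h.2.1 x y
  linarith

lemma my_chain_le {G : Type*} [Group G] {d : G → G → ℝ} (h : IsBiInvMetric d)
    (l : List (G × G)) :
    d (l.map Prod.fst).prod (l.map Prod.snd).prod ≤ (l.map fun q => d q.1 q.2).sum := by
  induction l with
  | nil => simp [(h.1.1 1 1).2 rfl]
  | cons q t ih =>
    simp only [List.map_cons, List.prod_cons, List.sum_cons]
    calc d (q.1 * (t.map Prod.fst).prod) (q.2 * (t.map Prod.snd).prod)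
        ≤ d (q.1 * (t.map Prod.fst).prod) (q.2 * (t.map Prod.fst).prod) +
          d (q.2 * (t.map Prod.fst).prod) (q.2 * (t.map Prod.snd).prod) := h.1.2.2 _ _ _
      _ = d q.1 q.2 + d (t.map Prod.fst).prod (t.map Prod.snd).prod := by
          rw [h.2.2 _ _ _, h.2.1]
      _ ≤ d q.1 q.2 + (t.map fun q => d q.1 q.2).sum := by linarith

lemma my_sum_scaled {c : ℝ} (l : List ℝ) (h : ∀ x ∈ l, ∃ k : ℕ, x = c * k) :
    ∃ k : ℕ, l.sum = c * k := by
  induction l with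
  | nil => exact ⟨0, by simp⟩
  | cons a t ih =>
    obtain ⟨k1, hk1⟩ := h a (by simp)
    obtain ⟨k2, hk2⟩ := ih (fun x hx => h x (by simp [hx]))
    exact ⟨k1 + k2, by simp [hk1, hk2]; ring⟩

lemma my_isLeast_sInf {S : Set ℝ} {c : ℝ} (hc : 0 < c) (hne : S.Nonempty)
    (h : ∀ s ∈ S, ∃ k : ℕ, s = c * k) : IsLeast S (sInf S) := by
  obtain ⟨s0, hs0⟩ := hne
  have hT : {k : ℕ | (c * k : ℝ) ∈ S}.Nonempty := by
    obtain ⟨k, rfl⟩ := h s0 hs0; exact ⟨k, hs0⟩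
  have hL : IsLeast S (c * (sInf {k : ℕ | (c * k : ℝ) ∈ S} : ℕ)) := by
    constructor
    · exact Nat.sInf_mem hT
    · rintro s hs
      obtain ⟨k, rfl⟩ := h s hs
      exact mul_le_mul_of_nonneg_left (Nat.cast_le.2 (Nat.sInf_le hs)) hc.le
  rwa [hL.csInf_eq]

lemma my_sum_zero {l : List ℝ} (hnn : ∀ x ∈ l, 0 ≤ x) (hs : l.sum = 0) :
    ∀ x ∈ l, x = 0 := by
  induction l with
  | nil => simp
  | cons a t ih =>
    simp only [List.sum_cons] at hs
    have ha : 0 ≤ a := hnn a (by simp)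
    have ht : 0 ≤ t.sum := List.sum_nonneg (fun x hx => hnn x (by simp [hx]))
    have ha0 : a = 0 := by linarith
    intro x hx
    rcases List.mem_cons.1 hx with rfl | hx
    · exact ha0
    · exact ih (fun y hy => hnn y (by simp [hy])) (by linarith) x hx

lemma my_map_sum_mul {α : Type*} (c : ℝ) (f : α → ℝ) (l : List α) :
    (l.map fun x => c * f x).sum = c * (l.map f).sum := by
  induction l with
  | nil => simp
  | cons a t ih => simp [ih]; ring

lemma my_sum_add_mul {α : Type*} (c : ℝ) (f : α → ℝ) (l : List α) :
    (l.map fun x => f x + c * f x).sum = (l.map f).sum + c * (l.map f).sum := by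
  induction l with
  | nil => simp
  | cons a t ih => simp only [List.map_cons, List.sum_cons, ih]; ring


theorem exists_rational_fin_gen_approximation (n : ℕ)
    (p : FreeGroup (Fin n) → FreeGroup (Fin n) → ℝ) (hp : IsFinGenMetric p)
    (ε : ℝ) (hε : 0 < ε) :
    ∃ d : FreeGroup (Fin n) → FreeGroup (Fin n) → ℝ,
      IsFinGenMetric d ∧ (∀ a b, ∃ q : ℚ, d a b = (q : ℝ)) ∧
      ∀ g : FreeGroup (Fin n), |p g 1 - d g 1| ≤ ε * (FreeGroup.norm g : ℝ) := by
  classical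
  obtain ⟨⟨hmet, hlinv, hrinv⟩, A, h1A, hAinv, hmin⟩ := hp
  have hpnn : ∀ x y : FreeGroup (Fin n), 0 ≤ p x y := my_metric_nonneg hmet
  have hp0 : ∀ x : FreeGroup (Fin n), p x x = 0 := fun x => (hmet.1 x x).2 rfl
  by_cases htriv : ∀ a b : FreeGroup (Fin n), a = b
  · -- trivial group case
    refine ⟨fun _ _ => 0, ⟨⟨⟨fun x y => ⟨fun _ => htriv x y, fun _ => rfl⟩,
      fun _ _ => rfl, fun _ _ _ => by norm_num⟩, fun _ _ _ => rfl, fun _ _ _ => rfl⟩,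
      {1}, Finset.mem_singleton_self 1, by simp, ?_⟩, fun a b => ⟨0, by simp⟩, ?_⟩
    · intro a b
      constructor
      · exact ⟨[], by simp, (htriv 1 a), (htriv 1 b), by simp⟩
      · rintro s ⟨l, -, -, -, rfl⟩
        simp
    · intro g
      have h1 : p g 1 = 0 := by rw [htriv g 1, hp0]
      rw [h1]
      simp only [sub_zero, abs_zero]
      positivity
  · push_neg at htriv
    obtain ⟨a0, b0, hab⟩ := htriv
    -- A contains a non-identity element
    have hx : ∃ x ∈ A, x ≠ (1 : FreeGroup (Fin n)) := by
      by_contra hcon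
      push_neg at hcon
      have hall : ∀ g : FreeGroup (Fin n), g = 1 := by
        intro g
        obtain ⟨l, hl1, hl2, -, -⟩ := (hmin g g).1
        rw [← hl2]
        exact List.prod_eq_one (by
          intro x hxl
          obtain ⟨q, hq, rfl⟩ := List.mem_map.1 hxl
          exact hcon q.1 (hl1 q hq).1)
      exact hab ((hall a0).trans (hall b0).symm)
    obtain ⟨x0, hx0A, hx0⟩ := hx
    -- μ : minimal p-distance between distinct elements of A
    have hμex : ∃ μ : ℝ, 0 < μ ∧ ∀ a b : FreeGroup (Fin n),
        a ∈ A → b ∈ A → a ≠ b → μ ≤ p a b := by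
      set P : Finset ℝ := ((A ×ˢ A).filter fun q => q.1 ≠ q.2).image fun q => p q.1 q.2
        with hP
      have hPne : P.Nonempty := ⟨p x0 1, Finset.mem_image.2 ⟨(x0, 1),
        Finset.mem_filter.2 ⟨Finset.mem_product.2 ⟨hx0A, h1A⟩, hx0⟩, rfl⟩⟩
      refine ⟨P.min' hPne, ?_, ?_⟩
      · obtain ⟨q, hq, hq2⟩ := Finset.mem_image.1 (P.min'_mem hPne)
        have hne : q.1 ≠ q.2 := (Finset.mem_filter.1 hq).2
        have hne0 : p q.1 q.2 ≠ 0 := fun h0 => hne ((hmet.1 q.1 q.2).1 h0)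
        rw [← hq2]
        exact lt_of_le_of_ne (hpnn _ _) (Ne.symm hne0)
      · intro a b ha hb hne
        exact P.min'_le _ (Finset.mem_image.2 ⟨(a, b),
          Finset.mem_filter.2 ⟨Finset.mem_product.2 ⟨ha, hb⟩, hne⟩, rfl⟩)
    obtain ⟨μ, hμpos, hμle⟩ := hμex
    -- C : bound constant for letters
    have hCex : ∃ C : ℝ, 0 < C ∧ ∀ g : FreeGroup (Fin n),
        p g 1 ≤ C * (FreeGroup.norm g : ℝ) := by
      refine ⟨1 + ∑ i : Fin n, p (FreeGroup.of i) 1, ?_, ?_⟩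
      · have : (0:ℝ) ≤ ∑ i : Fin n, p (FreeGroup.of i) 1 :=
          Finset.sum_nonneg (fun i _ => hpnn _ _)
        linarith
      · set C : ℝ := 1 + ∑ i : Fin n, p (FreeGroup.of i) 1 with hCdef
        have hCof : ∀ i : Fin n, p (FreeGroup.of i) 1 ≤ C := by
          intro i
          have := Finset.single_le_sum (f := fun i : Fin n => p (FreeGroup.of i) 1)
            (fun j _ => hpnn _ _) (Finset.mem_univ i)
          rw [hCdef]; linarith
        have hpsub : ∀ a b : FreeGroup (Fin n), p (a * b) 1 ≤ p a 1 + p b 1 := by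
          intro a b
          have h1 := hmet.2.2 (a * b) b 1
          have h2 := hrinv b a 1
          rw [one_mul] at h2
          linarith [h2 ▸ h1]
        have hletter : ∀ (i : Fin n) (bl : Bool), p (FreeGroup.mk [(i, bl)]) 1 ≤ C := by
          intro i bl
          cases bl
          · have h1 : FreeGroup.mk [(i, false)] = (FreeGroup.of i)⁻¹ := by
              simp [FreeGroup.of, FreeGroup.inv_mk, FreeGroup.invRev]
            have h5 := hlinv (FreeGroup.of i) (FreeGroup.of i)⁻¹ 1
            rw [mul_inv_cancel, mul_one] at h5
            rw [h1, ← h5, hmet.2.1]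
            exact hCof i
          · exact hCof i
        have hnormlist : ∀ L : List (Fin n × Bool),
            p (FreeGroup.mk L) 1 ≤ C * L.length := by
          intro L
          induction L with
          | nil =>
            have h0 : FreeGroup.mk ([] : List (Fin n × Bool)) = 1 := rfl
            rw [h0, hp0]; simp
          | cons q t ih =>
            have hsplit : FreeGroup.mk (q :: t) = FreeGroup.mk [q] * FreeGroup.mk t := by
              rw [FreeGroup.mul_mk]; rfl
            rw [hsplit]
            calc p (FreeGroup.mk [q] * FreeGroup.mk t) 1
                ≤ p (FreeGroup.mk [q]) 1 + p (FreeGroup.mk t) 1 := hpsub _ _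
              _ ≤ C + C * t.length := add_le_add (hletter q.1 q.2) ih
              _ = C * (q :: t).length := by simp [List.length_cons]; ring
        intro g
        have h1 : FreeGroup.mk g.toWord = g := FreeGroup.mk_toWord
        have h2 : FreeGroup.norm g = g.toWord.length := rfl
        calc p g 1 = p (FreeGroup.mk g.toWord) 1 := by rw [h1]
          _ ≤ C * g.toWord.length := hnormlist g.toWord
          _ = C * (FreeGroup.norm g : ℝ) := by rw [h2]
    obtain ⟨C, hC0, hnorm⟩ := hCex
    -- choose rational ε'
    obtain ⟨ε', hε'0, hε'δ⟩ := exists_rat_btwn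
      (show (0:ℝ) < ε * μ / C from div_pos (mul_pos hε hμpos) hC0)
    -- the seed weight function
    set w : FreeGroup (Fin n) → FreeGroup (Fin n) → ℝ :=
      fun a b => (ε' : ℝ) * ⌈p a b / (ε' : ℝ)⌉ with hwdef
    have hwscale : ∀ a b : FreeGroup (Fin n), ∃ k : ℕ, w a b = (ε' : ℝ) * k := by
      intro a b
      have hcnn : (0:ℤ) ≤ ⌈p a b / (ε' : ℝ)⌉ :=
        Int.ceil_nonneg (div_nonneg (hpnn a b) hε'0.le)
      refine ⟨(⌈p a b / (ε' : ℝ)⌉).toNat, ?_⟩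
      show (ε' : ℝ) * ⌈p a b / (ε' : ℝ)⌉ = (ε' : ℝ) * ((⌈p a b / (ε' : ℝ)⌉).toNat : ℕ)
      congr 1
      exact_mod_cast (Int.toNat_of_nonneg hcnn).symm
    have hwge : ∀ a b : FreeGroup (Fin n), p a b ≤ w a b := by
      intro a b
      have h1 : p a b / (ε' : ℝ) ≤ (⌈p a b / (ε' : ℝ)⌉ : ℝ) := Int.le_ceil _
      show p a b ≤ (ε' : ℝ) * ⌈p a b / (ε' : ℝ)⌉
      calc p a b = (ε' : ℝ) * (p a b / (ε' : ℝ)) := by field_simp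
        _ ≤ (ε' : ℝ) * ⌈p a b / (ε' : ℝ)⌉ := by gcongr
    have hwnn : ∀ a b : FreeGroup (Fin n), 0 ≤ w a b :=
      fun a b => le_trans (hpnn a b) (hwge a b)
    have hweq : ∀ a b : FreeGroup (Fin n), a = b → w a b = 0 := by
      rintro a b rfl
      show (ε' : ℝ) * ⌈p a a / (ε' : ℝ)⌉ = 0
      rw [hp0 a]; simp
    have hwsymm : ∀ a b : FreeGroup (Fin n), w a b = w b a := by
      intro a b
      show (ε' : ℝ) * ⌈p a b / (ε' : ℝ)⌉ = (ε' : ℝ) * ⌈p b a / (ε' : ℝ)⌉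
      rw [hmet.2.1 a b]
    have hwle : ∀ a b : FreeGroup (Fin n), w a b ≤ p a b + (ε' : ℝ) := by
      intro a b
      have h1 : (⌈p a b / (ε' : ℝ)⌉ : ℝ) < p a b / (ε' : ℝ) + 1 := Int.ceil_lt_add_one _
      show (ε' : ℝ) * ⌈p a b / (ε' : ℝ)⌉ ≤ p a b + (ε' : ℝ)
      have h2 := mul_lt_mul_of_pos_left h1 hε'0
      calc (ε' : ℝ) * ⌈p a b / (ε' : ℝ)⌉ ≤ (ε' : ℝ) * (p a b / (ε' : ℝ) + 1) := h2.le
        _ = p a b + (ε' : ℝ) := by field_simp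

    -- the generated set and metric
    set S : FreeGroup (Fin n) → FreeGroup (Fin n) → Set ℝ :=
      fun a b => {s : ℝ | ∃ l : List (FreeGroup (Fin n) × FreeGroup (Fin n)),
        (∀ q ∈ l, q.1 ∈ A ∧ q.2 ∈ A) ∧ (l.map Prod.fst).prod = a ∧
        (l.map Prod.snd).prod = b ∧ s = (l.map fun q => w q.1 q.2).sum} with hSdef
    have hSmem : ∀ (a b : FreeGroup (Fin n)) (s : ℝ),
        (∃ l : List (FreeGroup (Fin n) × FreeGroup (Fin n)),
          (∀ q ∈ l, q.1 ∈ A ∧ q.2 ∈ A) ∧ (l.map Prod.fst).prod = a ∧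
          (l.map Prod.snd).prod = b ∧ s = (l.map fun q => w q.1 q.2).sum) → s ∈ S a b :=
      fun a b s h => h
    have hSne : ∀ a b : FreeGroup (Fin n), (S a b).Nonempty := by
      intro a b
      obtain ⟨l, h1, h2, h3, -⟩ := (hmin a b).1
      exact ⟨_, hSmem a b _ ⟨l, h1, h2, h3, rfl⟩⟩
    have hSscale : ∀ (a b : FreeGroup (Fin n)) (s : ℝ), s ∈ S a b →
        ∃ k : ℕ, s = (ε' : ℝ) * k := by
      rintro a b s ⟨l, -, -, -, rfl⟩
      apply my_sum_scaled
      intro x hx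
      obtain ⟨q, -, rfl⟩ := List.mem_map.1 hx
      exact hwscale q.1 q.2
    set d : FreeGroup (Fin n) → FreeGroup (Fin n) → ℝ :=
      fun a b => sInf (S a b) with hddef
    have hd : ∀ a b : FreeGroup (Fin n), IsLeast (S a b) (d a b) :=
      fun a b => my_isLeast_sInf hε'0 (hSne a b) (hSscale a b)
    -- d dominates p
    have hdp : ∀ a b : FreeGroup (Fin n), p a b ≤ d a b := by
      intro a b
      obtain ⟨l, h1, h2, h3, h4⟩ := (hd a b).1
      have hle : (l.map fun q => p q.1 q.2).sum ≤ (l.map fun q => w q.1 q.2).sum :=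
        List.sum_le_sum (fun q _ => hwge q.1 q.2)
      have hge : p a b ≤ (l.map fun q => p q.1 q.2).sum :=
        (hmin a b).2 ⟨l, h1, h2, h3, rfl⟩
      rw [h4]; linarith
    -- zero-cost decompositions of (g, g)
    have hzero : ∀ g : FreeGroup (Fin n),
        ∃ l : List (FreeGroup (Fin n) × FreeGroup (Fin n)),
          (∀ q ∈ l, q.1 ∈ A ∧ q.2 ∈ A) ∧ (l.map Prod.fst).prod = g ∧
          (l.map Prod.snd).prod = g ∧ (l.map fun q => w q.1 q.2).sum = 0 := by
      intro g
      obtain ⟨l, h1, h2, h3, h4⟩ := (hmin g g).1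
      have hs0 : (l.map fun q => p q.1 q.2).sum = 0 := by rw [← h4, hp0]
      have hz : ∀ x ∈ l.map fun q => p q.1 q.2, x = 0 :=
        my_sum_zero (by
          intro x hx
          obtain ⟨q, -, rfl⟩ := List.mem_map.1 hx
          exact hpnn q.1 q.2) hs0
      refine ⟨l, h1, h2, h3, List.sum_eq_zero ?_⟩
      intro x hx
      obtain ⟨q, hq, rfl⟩ := List.mem_map.1 hx
      have hpq : p q.1 q.2 = 0 := hz _ (List.mem_map.2 ⟨q, hq, rfl⟩)
      exact hweq q.1 q.2 ((hmet.1 q.1 q.2).1 hpq)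
    -- bi-invariance of d
    have hdleft : ∀ g a b : FreeGroup (Fin n), d (g * a) (g * b) ≤ d a b := by
      intro g a b
      obtain ⟨l, h1, h2, h3, h4⟩ := (hd a b).1
      obtain ⟨l0, g1, g2, g3, g4⟩ := hzero g
      refine (hd (g * a) (g * b)).2 (hSmem _ _ _ ⟨l0 ++ l, ?_, ?_, ?_, ?_⟩)
      · exact List.forall_mem_append.2 ⟨g1, h1⟩
      · rw [List.map_append, List.prod_append, g2, h2]
      · rw [List.map_append, List.prod_append, g3, h3]
      · rw [List.map_append, List.sum_append, g4, ← h4, zero_add]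
    have hdlinv : ∀ g a b : FreeGroup (Fin n), d (g * a) (g * b) = d a b := by
      intro g a b
      refine le_antisymm (hdleft g a b) ?_
      have := hdleft g⁻¹ (g * a) (g * b)
      simpa using this
    have hdright : ∀ g a b : FreeGroup (Fin n), d (a * g) (b * g) = d a b := by
      intro g a b
      have key : ∀ g a b : FreeGroup (Fin n), d (a * g) (b * g) ≤ d a b := by
        intro g a b
        obtain ⟨l, h1, h2, h3, h4⟩ := (hd a b).1
        obtain ⟨l0, g1, g2, g3, g4⟩ := hzero g
        refine (hd (a * g) (b * g)).2 (hSmem _ _ _ ⟨l ++ l0, ?_, ?_, ?_, ?_⟩)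
        · exact List.forall_mem_append.2 ⟨h1, g1⟩
        · rw [List.map_append, List.prod_append, g2, h2]
        · rw [List.map_append, List.prod_append, g3, h3]
        · rw [List.map_append, List.sum_append, g4, ← h4, add_zero]
      refine le_antisymm (key g a b) ?_
      have := key g⁻¹ (a * g) (b * g)
      simpa using this
    -- symmetry of d
    have hdsymm : ∀ a b : FreeGroup (Fin n), d a b = d b a := by
      have key : ∀ a b : FreeGroup (Fin n), d a b ≤ d b a := by
        intro a b
        obtain ⟨l, h1, h2, h3, h4⟩ := (hd b a).1
        refine (hd a b).2 (hSmem _ _ _ ⟨l.map Prod.swap, ?_, ?_, ?_, ?_⟩)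
        · intro q hq
          obtain ⟨r, hr, rfl⟩ := List.mem_map.1 hq
          exact ⟨(h1 r hr).2, (h1 r hr).1⟩
        · rw [List.map_map]
          have : (Prod.fst ∘ Prod.swap : FreeGroup (Fin n) × FreeGroup (Fin n) →
            FreeGroup (Fin n)) = Prod.snd := by funext q; rfl
          rw [this, h3]
        · rw [List.map_map]
          have : (Prod.snd ∘ Prod.swap : FreeGroup (Fin n) × FreeGroup (Fin n) →
            FreeGroup (Fin n)) = Prod.fst := by funext q; rfl
          rw [this, h2]
        · rw [List.map_map, h4]
          congr 1
          apply List.map_congr_left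
          intro q hq
          exact hwsymm q.1 q.2
      exact fun a b => le_antisymm (key a b) (key b a)
    -- d a a = 0 and positivity
    have hdaa : ∀ a : FreeGroup (Fin n), d a a = 0 := by
      intro a
      obtain ⟨l0, g1, g2, g3, g4⟩ := hzero a
      have h1 : d a a ≤ 0 := (hd a a).2 (hSmem _ _ _ ⟨l0, g1, g2, g3, g4.symm⟩)
      have h2 : 0 ≤ d a a := le_trans (hpnn a a) (hdp a a)
      linarith
    have hd0 : ∀ a b : FreeGroup (Fin n), d a b = 0 ↔ a = b := by
      intro a b
      constructor
      · intro h
        have := hdp a b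
        have hp2 : p a b = 0 := le_antisymm (by linarith) (hpnn a b)
        exact (hmet.1 a b).1 hp2
      · rintro rfl; exact hdaa a
    -- triangle inequality
    have hdsub : ∀ g h : FreeGroup (Fin n), d (g * h) 1 ≤ d g 1 + d h 1 := by
      intro g h
      obtain ⟨l1, a1, a2, a3, a4⟩ := (hd g 1).1
      obtain ⟨l2, b1, b2, b3, b4⟩ := (hd h 1).1
      refine (hd (g * h) 1).2 (hSmem _ _ _ ⟨l1 ++ l2, ?_, ?_, ?_, ?_⟩)
      · exact List.forall_mem_append.2 ⟨a1, b1⟩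
      · rw [List.map_append, List.prod_append, a2, b2]
      · rw [List.map_append, List.prod_append, a3, b3, one_mul]
      · rw [List.map_append, List.sum_append, ← a4, ← b4]
    have hdtri : ∀ a b c : FreeGroup (Fin n), d a c ≤ d a b + d b c := by
      intro a b c
      have h1 : d a c = d (c⁻¹ * a) 1 := by
        have := hdlinv c⁻¹ a c
        rw [inv_mul_cancel] at this
        exact this.symm
      have h2 : d a b = d (b⁻¹ * a) 1 := by
        have := hdlinv b⁻¹ a b
        rw [inv_mul_cancel] at this
        exact this.symm
      have h3 : d b c = d (c⁻¹ * b) 1 := by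
        have := hdlinv c⁻¹ b c
        rw [inv_mul_cancel] at this
        exact this.symm
      have h4 : c⁻¹ * a = (c⁻¹ * b) * (b⁻¹ * a) := by group
      rw [h1, h2, h3, h4]
      have := hdsub (c⁻¹ * b) (b⁻¹ * a)
      linarith
    have hdbi : IsBiInvMetric d := ⟨⟨hd0, hdsymm, hdtri⟩, hdlinv, hdright⟩
    -- d is finitely generated with the same set A
    have hdfin : IsFinGenMetric d := by
      refine ⟨hdbi, A, h1A, hAinv, ?_⟩
      intro a b
      constructor
      · obtain ⟨l, h1, h2, h3, h4⟩ := (hd a b).1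
        have hle1 : (l.map fun q => d q.1 q.2).sum ≤ (l.map fun q => w q.1 q.2).sum := by
          apply List.sum_le_sum
          intro q hq
          exact (hd q.1 q.2).2 (hSmem _ _ _ ⟨[q], by
            intro r hr
            rw [List.mem_singleton] at hr
            exact hr ▸ h1 q hq, by simp, by simp, by simp⟩)
        have hge1 : d a b ≤ (l.map fun q => d q.1 q.2).sum := by
          have := my_chain_le hdbi l
          rw [h2, h3] at this
          exact this
        exact ⟨l, h1, h2, h3, le_antisymm hge1 (by rw [h4]; exact hle1)⟩
      · rintro s ⟨l, h1, h2, h3, rfl⟩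
        have := my_chain_le hdbi l
        rw [h2, h3] at this
        exact this
    -- d takes rational values
    have hdrat : ∀ a b : FreeGroup (Fin n), ∃ q : ℚ, d a b = (q : ℝ) := by
      intro a b
      obtain ⟨k, hk⟩ := hSscale a b (d a b) (hd a b).1
      exact ⟨ε' * k, by rw [hk]; push_cast; ring⟩
    -- the approximation bound
    refine ⟨d, hdfin, hdrat, ?_⟩
    intro g
    obtain ⟨l, h1, h2, h3, h4⟩ := (hmin g 1).1
    have hterm : ∀ q ∈ l, w q.1 q.2 ≤ p q.1 q.2 + (ε' : ℝ) / μ * p q.1 q.2 := by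
      intro q hq
      by_cases hqe : q.1 = q.2
      · rw [hweq q.1 q.2 hqe, hqe, hp0]
        simp
      · have hμq : μ ≤ p q.1 q.2 := hμle q.1 q.2 (h1 q hq).1 (h1 q hq).2 hqe
        have h5 : (ε' : ℝ) ≤ (ε' : ℝ) / μ * p q.1 q.2 := by
          rw [div_mul_eq_mul_div, le_div_iff₀ hμpos]
          calc (ε' : ℝ) * μ ≤ (ε' : ℝ) * p q.1 q.2 := by
                exact mul_le_mul_of_nonneg_left hμq hε'0.le
            _ = (ε' : ℝ) * p q.1 q.2 := rfl
        linarith [hwle q.1 q.2]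
    have hdg : d g 1 ≤ (l.map fun q => w q.1 q.2).sum :=
      (hd g 1).2 (hSmem _ _ _ ⟨l, h1, h2, h3, rfl⟩)
    have hsum1 : (l.map fun q => w q.1 q.2).sum ≤
        (l.map fun q => p q.1 q.2 + (ε' : ℝ) / μ * p q.1 q.2).sum :=
      List.sum_le_sum hterm
    have hmain : d g 1 ≤ p g 1 + (ε' : ℝ) / μ * p g 1 := by
      calc d g 1 ≤ (l.map fun q => w q.1 q.2).sum := hdg
        _ ≤ (l.map fun q => p q.1 q.2 + (ε' : ℝ) / μ * p q.1 q.2).sum := hsum1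
        _ = (l.map fun q => p q.1 q.2).sum +
            (ε' : ℝ) / μ * (l.map fun q => p q.1 q.2).sum := my_sum_add_mul _ _ l
        _ = p g 1 + (ε' : ℝ) / μ * p g 1 := by rw [← h4]
    have hN : (0:ℝ) ≤ (FreeGroup.norm g : ℝ) := Nat.cast_nonneg _
    have hpg : 0 ≤ p g 1 := hpnn g 1
    have hkey : (ε' : ℝ) * C < ε * μ := (lt_div_iff₀ hC0).1 hε'δ
    have hstep2 : (ε' : ℝ) / μ * p g 1 ≤ ε * (FreeGroup.norm g : ℝ) := by
      have h6 : (ε' : ℝ) / μ * p g 1 ≤ (ε' : ℝ) / μ * (C * (FreeGroup.norm g : ℝ)) := by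
        apply mul_le_mul_of_nonneg_left (hnorm g)
        positivity
      have h7 : (ε' : ℝ) / μ * (C * (FreeGroup.norm g : ℝ)) ≤
          ε * (FreeGroup.norm g : ℝ) := by
        rw [div_mul_eq_mul_div, div_le_iff₀ hμpos]
        nlinarith [hkey, hN]
      linarith
    have habs : p g 1 ≤ d g 1 := hdp g 1
    rw [abs_sub_comm, abs_of_nonneg (by linarith)]
    linarith
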